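/- Let α, β ∈ ℂ satisfy α² ∉ {0,1}, β² ∉ {0,1}, α² ≠ β², α²β² ≠ 1, and let ρ ∈ ℂ with ρ² = αβ. If (x, y) ∈ ℂ² satisfies y² = x(x−1)(x−α²)(x−β²)(x−α²β²), and x ≠ αβ, then the point (s, t) with s = (x+αβ)/(x−αβ) and t = 8αβ·ρ·y/((αβ−1)(α−β)(x−αβ)³) satisfies t² = (s²−1)(s²−e₁²)(s²−e₂²), where e₁ = (α+β)/(α−β) and e₂ = (αβ+1)/(αβ−1). -/

import Mathlib

set_option maxHeartbeats 2000000 in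
theorem stmt_3 (α β ρ x y : ℂ)
    (hα0 : α^2 ≠ 0) (hα1 : α^2 ≠ 1) (hβ0 : β^2 ≠ 0) (hβ1 : β^2 ≠ 1)
    (hαβ : α^2 ≠ β^2) (hαβ1 : α^2 * β^2 ≠ 1)
    (hρ : ρ^2 = α * β)
    (hV : y^2 = x * (x - 1) * (x - α^2) * (x - β^2) * (x - α^2 * β^2))
    (hx : x ≠ α * β) :
    (8 * (α * β) * ρ * y / ((α * β - 1) * (α - β) * (x - α * β)^3))^2 =
      (((x + α * β) / (x - α * β))^2 - 1) *
      (((x + α * β) / (x - α * β))^2 - ((α + β) / (α - β))^2) *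
      (((x + α * β) / (x - α * β))^2 - ((α * β + 1) / (α * β - 1))^2) := by
  have h1 : α - β ≠ 0 := fun h => hαβ (by rw [sub_eq_zero] at h; rw [h])
  have h2 : α * β - 1 ≠ 0 := fun h => hαβ1 (by rw [sub_eq_zero] at h; rw [show α^2*β^2 = (α*β)^2 by ring, h, one_pow])
  have h3 : x - α * β ≠ 0 := sub_ne_zero.mpr hx
  have hC : ((x - α * β) ^ 2 * ((x - α * β) ^ 2 * (α - β) ^ 2) * ((x - α * β) ^ 2 * (α * β - 1) ^ 2)) ≠ 0 := by
    exact mul_ne_zero (mul_ne_zero (pow_ne_zero _ h3) (mul_ne_zero (pow_ne_zero _ h3) (pow_ne_zero _ h1))) (mul_ne_zero (pow_ne_zero _ h3) (pow_ne_zero _ h2))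
  field_simp
  linear_combination (64*(α*β)^2*ρ^2) * hV + (64*(α*β)^2*(x * (x - 1) * (x - α^2) * (x - β^2) * (x - α^2 * β^2))) * hρ
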